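/- Let I = Ideal.span {f_1, …, f_t} ⊆ R = MvPolynomial (Fin N) ℂ where each f_i is M-homogeneous of degree d_i, let m ∈ M, and let p ∈ R be M-homogeneous of degree m. Then λ_p vanishes on I if and only if both: (i) for every 1 ≤ j ≤ N the functional Φ_j(λ_p) : f ↦ λ_p(x_j·f) vanishes on I (the closedness subspace condition), and (ii) λ_p(f_i) = 0 for every i with d_i = m. -/

import Mathlib

open MvPolynomial

/-- The Macaulay pairing `λ_p(f) = ∑_α coeff(α,p) * coeff(α,f)`, as a linear functional. -/
noncomputable def lam {N : ℕ} (p : MvPolynomial (Fin N) ℂ) :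
    MvPolynomial (Fin N) ℂ →ₗ[ℂ] ℂ where
  toFun f := ∑ α ∈ p.support, coeff α p * coeff α f
  map_add' f g := by simp [mul_add, Finset.sum_add_distrib]
  map_smul' c f := by
    simp [MvPolynomial.coeff_smul, Finset.mul_sum, mul_left_comm]

lemma lam_disjoint {N : ℕ} {M : Type*} [AddCommGroup M] (w : Fin N → M)
    {m d : M} (hmd : d ≠ m) {p q : MvPolynomial (Fin N) ℂ}
    (hp : p.IsWeightedHomogeneous w m) (hq : q.IsWeightedHomogeneous w d) :
    lam p q = 0 := by
  show ∑ α ∈ p.support, coeff α p * coeff α q = 0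
  apply Finset.sum_eq_zero
  intro α hα
  have h2 : coeff α q = 0 := by
    by_contra h
    exact hmd ((hq h).symm.trans (hp (MvPolynomial.mem_support_iff.mp hα)))
  simp [h2]

/-- **Cor. 3.1 (closedness subspace condition, multi-graded case)**: for
`I = ⟨f₁,…,f_t⟩` with each `f_i` `M`-homogeneous of degree `d_i`, and `p`
`M`-homogeneous of degree `m`, the functional `λ_p` vanishes on `I` iff
(i) each `Φ_j(λ_p) : f ↦ λ_p(x_j·f)` vanishes on `I`, and
(ii) `λ_p(f_i) = 0` for every `i` with `d_i = m`. -/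
theorem multigraded_closedness_condition {N t : ℕ} {M : Type*} [AddCommGroup M]
    (w : Fin N → M)
    (f : Fin t → MvPolynomial (Fin N) ℂ) (d : Fin t → M)
    (hf : ∀ i, (f i).IsWeightedHomogeneous w (d i))
    (I : Ideal (MvPolynomial (Fin N) ℂ)) (hI : I = Ideal.span (Set.range f))
    (m : M) (p : MvPolynomial (Fin N) ℂ) (hp : p.IsWeightedHomogeneous w m) :
    (∀ g ∈ I, lam p g = 0) ↔
      ((∀ j : Fin N, ∀ g ∈ I, lam p (X j * g) = 0) ∧
        ∀ i : Fin t, d i = m → lam p (f i) = 0) := by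
  constructor
  · intro h
    exact ⟨fun j g hg => h _ (I.mul_mem_left _ hg),
      fun i _ => h _ (hI ▸ Ideal.subset_span ⟨i, rfl⟩)⟩
  · rintro ⟨h1, h2⟩ g hg
    subst hI
    have key : ∀ i : Fin t, ∀ r : MvPolynomial (Fin N) ℂ, lam p (r * f i) = 0 := by
      intro i r
      induction r using MvPolynomial.induction_on' with
      | monomial α c =>
        by_cases hα : α = 0
        · subst hα
          rw [monomial_zero', C_mul', map_smul]
          rcases eq_or_ne (d i) m with h | h
          · simp [h2 i h]
          · simp [lam_disjoint w h hp (hf i)]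
        · obtain ⟨j, hj⟩ : ∃ j, α j ≠ 0 := by
            by_contra hc
            push_neg at hc
            exact hα (Finsupp.ext hc)
          have hs : Finsupp.single j 1 + (α - Finsupp.single j 1) = α := by
            ext k
            simp only [Finsupp.add_apply, Finsupp.tsub_apply, Finsupp.single_apply]
            rcases eq_or_ne j k with h | h
            · subst h; simp; omega
            · simp [h]
          have heq : monomial α c * f i
              = X j * (monomial (α - Finsupp.single j 1) c * f i) := by
            rw [← mul_assoc, X, monomial_mul, one_mul, hs]
          rw [heq]
          exact h1 j _ (Ideal.mul_mem_left _ _ (Ideal.subset_span ⟨i, rfl⟩))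
      | add a b ha hb => rw [add_mul, map_add, ha, hb, add_zero]
    have main : ∀ x ∈ Ideal.span (Set.range f),
        ∀ r : MvPolynomial (Fin N) ℂ, lam p (r * x) = 0 := by
      intro x hx
      refine Submodule.span_induction ?_ ?_ ?_ ?_ hx
      · rintro x ⟨i, rfl⟩ r
        exact key i r
      · intro r; simp
      · intro a b _ _ ha hb r
        rw [mul_add, map_add, ha, hb, add_zero]
      · intro a x _ hx r
        rw [smul_eq_mul, ← mul_assoc]
        exact hx (r * a)
    simpa using main g hg 1
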